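/- arXiv:0704.3169 — 3 statements merged into one kernel-verified Lean document; each statement's English description precedes it below -/
import Mathlib

section
/- Let u be a bounded C^2 function on the half-plane strip Ω = {ζ = x + iy : y ≥ 3/2} satisfying the eigenvalue equation y^2 Δu = 2u (Δ the Euclidean Laplacian), with u → 0 as y → ∞ and |u| ≤ c·(2/3) on {y = 3/2} (i.e. |u(x, 3/2)| ≤ c/y|_{y=3/2}). Then |u(ζ)| ≤ c/y for all ζ ∈ Ω. -/
open Filter Set Topology

/-- Second derivative test (local form): at a local max, if `f` is differentiable
near `a` and `deriv f` is differentiable at `a`, then `f'' a ≤ 0`. -/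
lemma second_deriv_nonpos_of_isLocalMax {f : ℝ → ℝ} {a : ℝ}
    (hfd : ∀ᶠ x in 𝓝 a, DifferentiableAt ℝ f x)
    (hf' : DifferentiableAt ℝ (deriv f) a)
    (h : IsLocalMax f a) : deriv (deriv f) a ≤ 0 := by
  by_contra hpos
  push_neg at hpos
  have h0 : deriv f a = 0 := h.deriv_eq_zero
  have hda : HasDerivAt (deriv f) (deriv (deriv f) a) a := hf'.hasDerivAt
  have hslope : Tendsto (slope (deriv f) a) (𝓝[≠] a) (𝓝 (deriv (deriv f) a)) :=
    hasDerivAt_iff_tendsto_slope.mp hda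
  have hev : ∀ᶠ x in 𝓝[>] a, 0 < deriv f x := by
    have h1 : ∀ᶠ x in 𝓝[≠] a, 0 < slope (deriv f) a x :=
      hslope.eventually (eventually_gt_nhds hpos)
    have h2 : ∀ᶠ x in 𝓝[>] a, 0 < slope (deriv f) a x :=
      h1.filter_mono (nhdsWithin_mono a fun x hx => ne_of_gt hx)
    filter_upwards [h2, self_mem_nhdsWithin] with x hx hx'
    have hxa : 0 < x - a := sub_pos.mpr hx'
    have hs : slope (deriv f) a x = deriv f x / (x - a) := by
      simp [slope, h0, div_eq_inv_mul]
    rw [hs] at hx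
    exact lt_of_not_ge fun hle =>
      absurd hx (not_lt.mpr (div_nonpos_of_nonpos_of_nonneg hle hxa.le))
  obtain ⟨v, hv, hvsub⟩ := mem_nhdsGT_iff_exists_Ioo_subset.mp hev
  obtain ⟨δ₁, hδ₁, hball₁⟩ := Metric.eventually_nhds_iff.mp hfd
  obtain ⟨δ₂, hδ₂, hball₂⟩ := Metric.eventually_nhds_iff.mp h
  have hva : 0 < v - a := sub_pos.mpr hv
  obtain ⟨b, hab, hb_le1, hb_le2, hb_le3⟩ :
      ∃ b, a < b ∧ b - a ≤ δ₁/2 ∧ b - a ≤ δ₂/2 ∧ b - a ≤ (v - a)/2 := by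
    refine ⟨a + min (δ₁/2) (min (δ₂/2) ((v - a)/2)), ?_, ?_, ?_, ?_⟩
    · have : 0 < min (δ₁/2) (min (δ₂/2) ((v - a)/2)) := by positivity
      linarith
    · rw [add_sub_cancel_left]; exact min_le_left _ _
    · rw [add_sub_cancel_left]; exact le_trans (min_le_right _ _) (min_le_left _ _)
    · rw [add_sub_cancel_left]; exact le_trans (min_le_right _ _) (min_le_right _ _)
  have hbv : b < v := by linarith
  have hdiff : ∀ x ∈ Icc a b, DifferentiableAt ℝ f x := by
    intro x hx
    apply hball₁
    rw [Real.dist_eq, abs_of_nonneg (by linarith [hx.1])]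
    linarith [hx.2, hb_le1]
  have hmono : StrictMonoOn f (Icc a b) := by
    apply strictMonoOn_of_deriv_pos (convex_Icc a b)
      (fun x hx => (hdiff x hx).continuousAt.continuousWithinAt)
    intro x hx
    rw [interior_Icc] at hx
    exact hvsub ⟨hx.1, lt_of_lt_of_le hx.2 hbv.le⟩
  have hfb : f b ≤ f a := by
    apply hball₂
    rw [Real.dist_eq, abs_of_nonneg (by linarith)]
    linarith [hb_le2]
  have : f a < f b := hmono ⟨le_rfl, hab.le⟩ ⟨hab.le, le_rfl⟩ hab
  linarith

set_option maxHeartbeats 1600000 in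
lemma one_sided_comparison (c : ℝ) (hc : 0 ≤ c) (u : ℝ → ℝ → ℝ)
    (hC2 : ContDiff ℝ 2 (fun p : ℝ × ℝ => u p.1 p.2))
    (hbdd : ∃ M : ℝ, ∀ x y : ℝ, 3 / 2 ≤ y → u x y ≤ M)
    (heq : ∀ x y : ℝ, 3 / 2 ≤ y →
      y ^ 2 * (deriv (deriv (fun x' : ℝ => u x' y)) x
        + deriv (deriv (fun y' : ℝ => u x y')) y) = 2 * u x y)
    (hlim : ∀ ε : ℝ, 0 < ε → ∃ Y : ℝ, ∀ x y : ℝ, Y ≤ y → u x y ≤ ε)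
    (hbound : ∀ x : ℝ, u x (3 / 2) ≤ c / (3 / 2)) :
    ∀ x y : ℝ, 3 / 2 ≤ y → u x y ≤ c / y := by
  intro x₀ y₀ hy₀
  have hy₀pos : (0:ℝ) < y₀ := by linarith
  have key : ∀ ε : ℝ, 0 < ε → u x₀ y₀ - c / y₀ ≤ ε * (x₀ ^ 2 * (4/9) + 1) := by
    intro ε hε
    obtain ⟨M₀, hM₀⟩ := hbdd
    obtain ⟨M, hM, hM0⟩ : ∃ M : ℝ, (∀ x y : ℝ, 3/2 ≤ y → u x y ≤ M) ∧ 0 ≤ M :=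
      ⟨max M₀ 0, fun x y hy => (hM₀ x y hy).trans (le_max_left _ _), le_max_right _ _⟩
    obtain ⟨Y₀, hY₀⟩ := hlim ε hε
    obtain ⟨Y, hYY₀, hYy₀, hY2⟩ : ∃ Y : ℝ, Y₀ ≤ Y ∧ y₀ ≤ Y ∧ 2 ≤ Y :=
      ⟨max (max Y₀ y₀) 2, le_trans (le_max_left _ _) (le_max_left _ _),
        le_trans (le_max_right _ _) (le_max_left _ _), le_max_right _ _⟩
    have hY0 : (0:ℝ) < Y := by linarith
    obtain ⟨b, hb, hbY⟩ : ∃ b : ℝ, 0 < b ∧ b * Y ^ 2 = ε :=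
      ⟨ε / Y ^ 2, div_pos hε (by positivity), by field_simp⟩
    obtain ⟨R, hRx, hRM⟩ : ∃ R : ℝ, |x₀| ≤ R ∧ M ≤ b * R ^ 2 := by
      refine ⟨|x₀| + Y * (M / ε + 1), le_add_of_nonneg_right (by positivity), ?_⟩
      have h1 : Y * (M / ε + 1) ≤ |x₀| + Y * (M / ε + 1) :=
        le_add_of_nonneg_left (abs_nonneg _)
      have h2 : 0 ≤ Y * (M / ε + 1) := by positivity
      have h3 : b * (Y * (M / ε + 1)) ^ 2 ≤ b * (|x₀| + Y * (M / ε + 1)) ^ 2 := by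
        apply mul_le_mul_of_nonneg_left _ hb.le
        exact pow_le_pow_left₀ h2 h1 2
      have h4 : b * (Y * (M / ε + 1)) ^ 2 = ε * (M / ε + 1) ^ 2 := by
        rw [mul_pow]; rw [← hbY]; ring
      have h5 : M ≤ ε * (M / ε + 1) ^ 2 := by
        have hMε : M / ε * ε = M := div_mul_cancel₀ M (ne_of_gt hε)
        nlinarith [sq_nonneg (M / ε), div_nonneg hM0 hε.le]
      linarith
    -- the comparison function
    have hGdef : ∀ q : ℝ × ℝ, (fun p : ℝ × ℝ => u p.1 p.2 - c / p.2 - b * p.1 ^ 2 - ε) q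
        = u q.1 q.2 - c / q.2 - b * q.1 ^ 2 - ε := fun q => rfl
    have hx₀D : (x₀, y₀) ∈ Icc (-R) R ×ˢ Icc (3/2 : ℝ) Y := by
      refine ⟨?_, hy₀, hYy₀⟩
      have := abs_le.mp hRx
      exact ⟨this.1, this.2⟩
    have hGc : ContinuousOn (fun p : ℝ × ℝ => u p.1 p.2 - c / p.2 - b * p.1 ^ 2 - ε)
        (Icc (-R) R ×ˢ Icc (3/2 : ℝ) Y) := by
      apply ContinuousOn.sub
      apply ContinuousOn.sub
      apply ContinuousOn.sub
      · exact hC2.continuous.continuousOn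
      · apply ContinuousOn.div continuousOn_const continuous_snd.continuousOn
        intro p hp
        have : (3:ℝ)/2 ≤ p.2 := hp.2.1
        exact ne_of_gt (by linarith)
      · exact (continuous_const.mul (continuous_fst.pow 2)).continuousOn
      · exact continuousOn_const
    obtain ⟨p, hpD, hpmax⟩ :=
      (isCompact_Icc.prod isCompact_Icc).exists_isMaxOn ⟨(x₀, y₀), hx₀D⟩ hGc
    have hpmax' : ∀ q ∈ Icc (-R) R ×ˢ Icc (3/2 : ℝ) Y,
        u q.1 q.2 - c / q.2 - b * q.1 ^ 2 - ε
          ≤ u p.1 p.2 - c / p.2 - b * p.1 ^ 2 - ε := fun q hq => hpmax hq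
    have hkey : u p.1 p.2 - c / p.2 - b * p.1 ^ 2 - ε ≤ 0 := by
      by_contra hpos
      push_neg at hpos
      obtain ⟨⟨hpx1, hpx2⟩, hpy1, hpy2⟩ := hpD
      have hp2pos : (0:ℝ) < p.2 := by linarith
      -- p is interior
      have hpy2' : p.2 < Y := by
        rcases lt_or_eq_of_le hpy2 with h | h
        · exact h
        · exfalso
          have h1 : u p.1 p.2 ≤ ε := hY₀ p.1 p.2 (by rw [← h] at hYY₀; exact hYY₀)
          have h2 : 0 ≤ c / p.2 := div_nonneg hc hp2pos.le
          have h3 : 0 ≤ b * p.1 ^ 2 := by positivity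
          linarith
      have hpy1' : 3/2 < p.2 := by
        rcases eq_or_lt_of_le hpy1 with h | h
        · exfalso
          have h1 : u p.1 p.2 ≤ c / p.2 := by rw [← h]; exact hbound p.1
          have h3 : 0 ≤ b * p.1 ^ 2 := by positivity
          linarith
        · exact h
      have hxint : -R < p.1 ∧ p.1 < R := by
        have hR2 : p.1 ^ 2 ≤ R ^ 2 := by nlinarith
        constructor
        · rcases eq_or_lt_of_le hpx1 with h | h
          · exfalso
            have h1 : u p.1 p.2 ≤ M := hM p.1 p.2 hpy1
            have h2 : 0 ≤ c / p.2 := div_nonneg hc hp2pos.le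
            have hp1sq : p.1 ^ 2 = R ^ 2 := by rw [← h]; ring
            rw [hp1sq] at hpos; linarith
          · exact h
        · rcases lt_or_eq_of_le hpx2 with h | h
          · exact h
          · exfalso
            have h1 : u p.1 p.2 ≤ M := hM p.1 p.2 hpy1
            have h2 : 0 ≤ c / p.2 := div_nonneg hc hp2pos.le
            have hp1sq : p.1 ^ 2 = R ^ 2 := by rw [h]
            rw [hp1sq] at hpos; linarith
      obtain ⟨hpx1', hpx2'⟩ := hxint
      -- slice regularity
      have hsx : ContDiff ℝ 2 (fun x' => u x' p.2) :=
        hC2.comp (contDiff_id.prodMk contDiff_const)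
      have hsy : ContDiff ℝ 2 (fun y' => u p.1 y') :=
        hC2.comp (contDiff_const.prodMk contDiff_id)
      have hsx1 : ContDiff ℝ 1 (deriv (fun x' => u x' p.2)) := by
        have h2 : ContDiff ℝ ((1:ℕ) + 1) (fun x' => u x' p.2) := by exact_mod_cast hsx
        exact_mod_cast (contDiff_succ_iff_deriv.mp h2).2.2
      have hsy1 : ContDiff ℝ 1 (deriv (fun y' => u p.1 y')) := by
        have h2 : ContDiff ℝ ((1:ℕ) + 1) (fun y' => u p.1 y') := by exact_mod_cast hsy
        exact_mod_cast (contDiff_succ_iff_deriv.mp h2).2.2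
      -- local maxima of slices
      have hlx : IsLocalMax (fun x' => u x' p.2 - c / p.2 - b * x' ^ 2 - ε) p.1 := by
        filter_upwards [Ioo_mem_nhds hpx1' hpx2'] with x hx
        exact hpmax' (x, p.2) ⟨⟨hx.1.le, hx.2.le⟩, hpy1, hpy2⟩
      have hly : IsLocalMax (fun y' => u p.1 y' - c / y' - b * p.1 ^ 2 - ε) p.2 := by
        filter_upwards [Ioo_mem_nhds hpy1' hpy2'] with y hy
        exact hpmax' (p.1, y) ⟨⟨hpx1, hpx2⟩, hy.1.le, hy.2.le⟩
      -- x-direction second derivative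
      have hdx1 : deriv (fun x' => u x' p.2 - c / p.2 - b * x' ^ 2 - ε)
          = fun x' => deriv (fun t => u t p.2) x' - 2 * b * x' := by
        funext t
        have h1 : HasDerivAt (fun x' => u x' p.2)
            (deriv (fun x' => u x' p.2) t) t :=
          ((hsx.differentiable (by norm_num)) t).hasDerivAt
        have hq : HasDerivAt (fun x' : ℝ => b * x' ^ 2) (2 * b * t) t := by
          have := (hasDerivAt_pow 2 t).const_mul b
          simpa [mul_comm, mul_assoc, mul_left_comm] using this
        have h2 := ((h1.sub_const (c / p.2)).sub hq).sub_const ε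
        have h3 : HasDerivAt (fun x' => u x' p.2 - c / p.2 - b * x' ^ 2 - ε)
            (deriv (fun x' => u x' p.2) t - 2 * b * t) t := h2
        exact h3.deriv
      have hdx : deriv (deriv (fun x' => u x' p.2 - c / p.2 - b * x' ^ 2 - ε)) p.1
          = deriv (deriv (fun t => u t p.2)) p.1 - 2 * b := by
        rw [hdx1]
        have hd1 : DifferentiableAt ℝ (deriv (fun t => u t p.2)) p.1 :=
          (hsx1.differentiable one_ne_zero) p.1
        have hd2 : HasDerivAt (fun x' : ℝ => 2 * b * x') (2 * b) p.1 := by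
          simpa using (hasDerivAt_id p.1).const_mul (2 * b)
        rw [deriv_fun_sub hd1 hd2.differentiableAt, hd2.deriv]
      -- y-direction second derivative
      have hdy1 : deriv (fun y' => u p.1 y' - c / y' - b * p.1 ^ 2 - ε)
          =ᶠ[nhds p.2] fun y' => deriv (fun t => u p.1 t) y' + c / y' ^ 2 := by
        filter_upwards [Ioi_mem_nhds hp2pos] with t ht
        have htpos : (0:ℝ) < t := ht
        have h1 : HasDerivAt (fun y' => u p.1 y')
            (deriv (fun y' => u p.1 y') t) t :=
          ((hsy.differentiable (by norm_num)) t).hasDerivAt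
        have h2 : HasDerivAt (fun y' : ℝ => c / y') (-(c / t ^ 2)) t := by
          have hinv : HasDerivAt (fun y' : ℝ => y'⁻¹) (-(t ^ 2)⁻¹) t :=
            hasDerivAt_inv (ne_of_gt htpos)
          have := hinv.const_mul c
          simpa [div_eq_mul_inv, neg_mul, mul_neg] using this
        have h3 := ((h1.sub h2).sub_const (b * p.1 ^ 2)).sub_const ε
        have h4 : HasDerivAt (fun y' => u p.1 y' - c / y' - b * p.1 ^ 2 - ε)
            (deriv (fun y' => u p.1 y') t - -(c / t ^ 2)) t := h3
        rw [h4.deriv]; ring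
      have hdy : deriv (deriv (fun y' => u p.1 y' - c / y' - b * p.1 ^ 2 - ε)) p.2
          = deriv (deriv (fun t => u p.1 t)) p.2 - 2 * c / p.2 ^ 3 := by
        rw [hdy1.deriv_eq]
        have hd1 : DifferentiableAt ℝ (deriv (fun t => u p.1 t)) p.2 :=
          (hsy1.differentiable one_ne_zero) p.2
        have hd2 : HasDerivAt (fun y' : ℝ => c / y' ^ 2) (-(2 * c / p.2 ^ 3)) p.2 := by
          have hsq : HasDerivAt (fun y' : ℝ => y' ^ 2) (2 * p.2) p.2 := by
            simpa using hasDerivAt_pow 2 p.2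
          have hinv : HasDerivAt (fun y' : ℝ => (y' ^ 2)⁻¹)
              (-(2 * p.2) / (p.2 ^ 2) ^ 2) p.2 :=
            hsq.inv (pow_ne_zero 2 (ne_of_gt hp2pos))
          have := hinv.const_mul c
          have heq2 : c * (-(2 * p.2) / (p.2 ^ 2) ^ 2) = -(2 * c / p.2 ^ 3) := by
            field_simp
          rw [heq2] at this
          simpa [div_eq_mul_inv] using this
        rw [deriv_fun_add hd1 hd2.differentiableAt, hd2.deriv]
        ring
      -- apply second derivative test
      have hA : deriv (deriv (fun x' => u x' p.2 - c / p.2 - b * x' ^ 2 - ε)) p.1 ≤ 0 := by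
        apply second_deriv_nonpos_of_isLocalMax _ _ hlx
        · filter_upwards with x
          have h1 : DifferentiableAt ℝ (fun x' => u x' p.2) x :=
            (hsx.differentiable (by norm_num)) x
          show DifferentiableAt ℝ (fun x' => u x' p.2 - c / p.2 - b * x' ^ 2 - ε) x
          exact ((h1.sub_const _).sub
            ((differentiableAt_const b).mul (differentiableAt_id.pow 2))).sub_const _
        · rw [hdx1]
          apply DifferentiableAt.sub ((hsx1.differentiable one_ne_zero) p.1)
          exact (differentiableAt_const _).mul differentiableAt_id
      have hB : deriv (deriv (fun y' => u p.1 y' - c / y' - b * p.1 ^ 2 - ε)) p.2 ≤ 0 := by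
        apply second_deriv_nonpos_of_isLocalMax _ _ hly
        · filter_upwards [Ioi_mem_nhds hp2pos] with t ht
          have htpos : (0:ℝ) < t := ht
          have h1 : DifferentiableAt ℝ (fun y' => u p.1 y') t :=
            (hsy.differentiable (by norm_num)) t
          have h2 : DifferentiableAt ℝ (fun y' : ℝ => c / y') t :=
            (differentiableAt_const c).div differentiableAt_id (ne_of_gt htpos)
          show DifferentiableAt ℝ (fun y' => u p.1 y' - c / y' - b * p.1 ^ 2 - ε) t
          exact ((h1.sub h2).sub_const _).sub_const _
        · rw [hdy1.differentiableAt_iff]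
          apply DifferentiableAt.add ((hsy1.differentiable one_ne_zero) p.2)
          exact (differentiableAt_const c).div (differentiableAt_id.pow 2)
            (pow_ne_zero 2 (ne_of_gt hp2pos))
      -- contradiction via the PDE
      rw [hdx] at hA
      rw [hdy] at hB
      have hpde := heq p.1 p.2 hpy1
      obtain ⟨Uxx, hUxx⟩ : ∃ v, deriv (deriv (fun x' : ℝ => u x' p.2)) p.1 = v := ⟨_, rfl⟩
      obtain ⟨Uyy, hUyy⟩ : ∃ v, deriv (deriv (fun y' : ℝ => u p.1 y')) p.2 = v := ⟨_, rfl⟩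
      rw [hUxx] at hA hpde
      rw [hUyy] at hB hpde
      have hq2 : (0:ℝ) < p.2 ^ 2 := by positivity
      have hcub : p.2 ^ 2 * (2 * c / p.2 ^ 3) = 2 * (c / p.2) := by
        field_simp
      have hsum : p.2 ^ 2 * (Uxx + Uyy) ≤ 2 * b * p.2 ^ 2 + 2 * (c / p.2) := by
        have h1 : Uxx + Uyy ≤ 2 * b + 2 * c / p.2 ^ 3 := by linarith
        have h2 : p.2 ^ 2 * (Uxx + Uyy) ≤ p.2 ^ 2 * (2 * b + 2 * c / p.2 ^ 3) :=
          mul_le_mul_of_nonneg_left h1 hq2.le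
        calc p.2 ^ 2 * (Uxx + Uyy) ≤ p.2 ^ 2 * (2 * b + 2 * c / p.2 ^ 3) := h2
          _ = 2 * b * p.2 ^ 2 + p.2 ^ 2 * (2 * c / p.2 ^ 3) := by ring
          _ = 2 * b * p.2 ^ 2 + 2 * (c / p.2) := by rw [hcub]
      rw [hpde] at hsum
      -- u p ≤ b p.2² + c/p.2 ; u p > c/p.2 + b p.1² + ε ≥ c/p.2 + ε ; b p.2² < b Y² = ε
      have hb1 : 0 ≤ b * p.1 ^ 2 := by positivity
      have hb2 : b * p.2 ^ 2 < b * Y ^ 2 := by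
        have hfac : b * Y ^ 2 - b * p.2 ^ 2 = b * ((Y - p.2) * (Y + p.2)) := by ring
        have hpos2 : 0 < b * ((Y - p.2) * (Y + p.2)) :=
          mul_pos hb (mul_pos (by linarith) (by linarith))
        linarith
      linarith
    -- conclusion from the maximum
    have hfin : u x₀ y₀ - c / y₀ - b * x₀ ^ 2 - ε ≤ 0 := le_trans (hpmax' (x₀, y₀) hx₀D) hkey
    have hGx₀ : u x₀ y₀ - c / y₀ - b * x₀ ^ 2 - ε = u x₀ y₀ - c / y₀ - b * x₀ ^ 2 - ε := rfl
    rw [hGx₀] at hfin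
    have hble : b ≤ ε * (4/9) := by
      have h0 : 0 ≤ b * ((Y - 2) * (Y + 2)) :=
        mul_nonneg hb.le (mul_nonneg (by linarith) (by linarith))
      have h1 : b * Y ^ 2 - 4 * b = b * ((Y - 2) * (Y + 2)) := by ring
      linarith
    nlinarith [sq_nonneg x₀]
  -- from the ε-family of bounds conclude
  by_contra hcon
  push_neg at hcon
  have ha : 0 < u x₀ y₀ - c / y₀ := by linarith
  have hK : (0:ℝ) < x₀ ^ 2 * (4/9) + 1 := by positivity
  have h1 := key ((u x₀ y₀ - c / y₀) / (2 * (x₀ ^ 2 * (4/9) + 1))) (by positivity)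
  have h2 : (u x₀ y₀ - c / y₀) / (2 * (x₀ ^ 2 * (4/9) + 1)) * (x₀ ^ 2 * (4/9) + 1)
      = (u x₀ y₀ - c / y₀) / 2 := by field_simp
  rw [h2] at h1
  linarith

/-- Maximum-principle comparison: a bounded eigenfunction `u` of `y²Δ` with
eigenvalue `2` on `{y ≥ 3/2}`, vanishing at infinity and bounded by `c/y` on the
boundary, satisfies `|u| ≤ c/y` throughout. -/
theorem eigenfunction_comparison (c : ℝ) (hc : 0 ≤ c) (u : ℝ → ℝ → ℝ)
    (hC2 : ContDiff ℝ 2 (fun p : ℝ × ℝ => u p.1 p.2))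
    (hbdd : ∃ M : ℝ, ∀ x y : ℝ, 3 / 2 ≤ y → |u x y| ≤ M)
    (heq : ∀ x y : ℝ, 3 / 2 ≤ y →
      y ^ 2 * (deriv (deriv (fun x' : ℝ => u x' y)) x
        + deriv (deriv (fun y' : ℝ => u x y')) y) = 2 * u x y)
    (hlim : ∀ ε : ℝ, 0 < ε → ∃ Y : ℝ, ∀ x y : ℝ, Y ≤ y → |u x y| ≤ ε)
    (hbound : ∀ x : ℝ, |u x (3 / 2)| ≤ c / (3 / 2)) :
    ∀ x y : ℝ, 3 / 2 ≤ y → |u x y| ≤ c / y := by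
  intro x y hy
  have h1 : u x y ≤ c / y := by
    apply one_sided_comparison c hc u hC2 ?_ heq ?_ ?_ x y hy
    · obtain ⟨M, hM⟩ := hbdd
      exact ⟨M, fun a b hb => (abs_le.mp (hM a b hb)).2⟩
    · intro ε hε
      obtain ⟨Y, hY⟩ := hlim ε hε
      exact ⟨Y, fun a b hb => (abs_le.mp (hY a b hb)).2⟩
    · intro a
      exact (abs_le.mp (hbound a)).2
  have h2 : -u x y ≤ c / y := by
    have hC2' : ContDiff ℝ 2 (fun p : ℝ × ℝ => (fun a b => -u a b) p.1 p.2) := hC2.neg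
    apply one_sided_comparison c hc (fun a b => -u a b) hC2' ?_ ?_ ?_ ?_ x y hy
    · obtain ⟨M, hM⟩ := hbdd
      exact ⟨M, fun a b hb => by
        have := (abs_le.mp (hM a b hb)).1
        show -u a b ≤ M
        linarith⟩
    · intro a b hb
      have hx2 : deriv (deriv (fun x' : ℝ => -u x' b)) a
          = -deriv (deriv (fun x' : ℝ => u x' b)) a := by
        have e : (deriv (fun x' : ℝ => -u x' b))
            = fun t => -deriv (fun x' : ℝ => u x' b) t := funext fun t => deriv.neg
        rw [e]; exact deriv.neg
      have hy2 : deriv (deriv (fun y' : ℝ => -u a y')) b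
          = -deriv (deriv (fun y' : ℝ => u a y')) b := by
        have e : (deriv (fun y' : ℝ => -u a y'))
            = fun t => -deriv (fun y' : ℝ => u a y') t := funext fun t => deriv.neg
        rw [e]; exact deriv.neg
      have hweq := heq a b hb
      show b ^ 2 * (deriv (deriv (fun x' : ℝ => -u x' b)) a
        + deriv (deriv (fun y' : ℝ => -u a y')) b) = 2 * -u a b
      rw [hx2, hy2]
      linarith [hweq, sq_nonneg b]
      -- b^2 * (-X + -Y) = -(b^2*(X+Y)) = -(2u) = 2*(-u)
    · intro ε hε
      obtain ⟨Y, hY⟩ := hlim ε hε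
      exact ⟨Y, fun a b hb => by
        have := (abs_le.mp (hY a b hb)).1
        show -u a b ≤ ε
        linarith⟩
    · intro a
      have := (abs_le.mp (hbound a)).1
      show -u a (3/2) ≤ c / (3/2)
      linarith
  exact abs_le.mpr ⟨by linarith, h1⟩
end

section
/- Block determinant asymptotics: let 𝒜 be a symmetric (m+n)×(m+n) matrix with diagonal entries λ_1,…,λ_n in the first n positions, off-diagonal entries a_{jℓ} in rows/columns 1..n bounded by M, and lower-right m×m block B with entries bounded by M and det B ≠ 0. Then with ρ = Σ_{k=1}^n λ_k^{-1}, det 𝒜 = (det B)·(∏_{k=1}^n λ_k)·(1 + O(ρ)), where the O-constant depends only on m+n, M and det B^{-1}, valid for all λ_k sufficiently large. -/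
/-- Block determinant asymptotics:
`det 𝒜 = det B · ∏ λ_k · (1 + O(ρ))` with `ρ = Σ λ_k⁻¹`, for
`𝒜 = fromBlocks (diag λ + A') A'' A''ᵀ B` with bounded entries. -/
theorem block_determinant_asymptotics (m n : ℕ) (M : ℝ) (hM : 0 < M)
    (B : Matrix (Fin m) (Fin m) ℝ) (hBsymm : B.IsSymm) (hBdet : B.det ≠ 0)
    (hBbd : ∀ i j, |B i j| ≤ M) :
    ∃ C lam0 : ℝ, 0 < C ∧ 0 < lam0 ∧
      ∀ (lam : Fin n → ℝ) (A' : Matrix (Fin n) (Fin n) ℝ) (A'' : Matrix (Fin n) (Fin m) ℝ),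
        (∀ k, lam0 ≤ lam k) → A'.IsSymm → (∀ k, A' k k = 0) →
        (∀ i j, |A' i j| ≤ M) → (∀ i j, |A'' i j| ≤ M) →
        |(Matrix.fromBlocks (Matrix.diagonal lam + A') A'' A''.transpose B).det
            / (B.det * ∏ k, lam k) - 1| ≤ C * ∑ k, (lam k)⁻¹ := by
  classical
  set Mx : ℝ := max M 1 with hMxdef
  have hMx1 : (1:ℝ) ≤ Mx := le_max_right _ _
  have hMx0 : (0:ℝ) < Mx := lt_of_lt_of_le one_pos hMx1
  have hMMx : M ≤ Mx := le_max_left _ _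
  have hBd : (0:ℝ) < |B.det| := abs_pos.mpr hBdet
  set cardP : ℕ := Fintype.card (Equiv.Perm (Fin n ⊕ Fin m)) with hcard
  have hcardpos : 0 < (cardP : ℝ) := by positivity
  refine ⟨(cardP : ℝ) * (2 * Mx ^ (n + m)) / |B.det|, 1, by positivity, one_pos, ?_⟩
  intro lam A' A'' hlam hA'symm hA'diag hA'bd hA''bd
  have hlam1 : ∀ k, (1:ℝ) ≤ lam k := hlam
  have hlampos : ∀ k, (0:ℝ) < lam k := fun k => lt_of_lt_of_le one_pos (hlam1 k)
  have hprodpos : (0:ℝ) < ∏ k, lam k := Finset.prod_pos fun k _ => hlampos k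
  have hrho0 : (0:ℝ) ≤ ∑ k, (lam k)⁻¹ :=
    Finset.sum_nonneg fun k _ => inv_nonneg.mpr (hlampos k).le
  set 𝒜 := Matrix.fromBlocks (Matrix.diagonal lam + A') A'' A''.transpose B with h𝒜
  set D := Matrix.fromBlocks (Matrix.diagonal lam) (0 : Matrix (Fin n) (Fin m) ℝ)
      (0 : Matrix (Fin m) (Fin n) ℝ) B with hDdef
  have hD : D.det = (∏ k, lam k) * B.det := by
    rw [hDdef, Matrix.det_fromBlocks_zero₂₁, Matrix.det_diagonal]
  -- entrywise bound function for a given permutation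
  have key : |𝒜.det - D.det| ≤
      (cardP : ℝ) * (2 * Mx ^ (n + m)) * ((∏ k, lam k) * ∑ k, (lam k)⁻¹) := by
    rw [Matrix.det_apply, Matrix.det_apply, ← Finset.sum_sub_distrib]
    refine (Finset.abs_sum_le_sum_abs _ _).trans ?_
    have hterm : ∀ σ ∈ (Finset.univ : Finset (Equiv.Perm (Fin n ⊕ Fin m))),
        |Equiv.Perm.sign σ • ∏ i, 𝒜 (σ i) i - Equiv.Perm.sign σ • ∏ i, D (σ i) i|
          ≤ 2 * Mx ^ (n + m) * ((∏ k, lam k) * ∑ k, (lam k)⁻¹) := by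
      intro σ _
      have hsign : |((Equiv.Perm.sign σ : ℤ) : ℝ)| = 1 := by
        rcases Int.units_eq_one_or (Equiv.Perm.sign σ) with h | h <;> simp [h]
      rw [← smul_sub, Units.smul_def, zsmul_eq_mul, abs_mul, hsign, one_mul]
      by_cases hfix : ∀ k : Fin n, σ (Sum.inl k) = Sum.inl k
      · have : (∏ i, 𝒜 (σ i) i) = ∏ i, D (σ i) i := by
          refine Finset.prod_congr rfl fun i _ => ?_
          rcases i with k | j
          · rw [hfix k, h𝒜, hDdef]
            simp [Matrix.fromBlocks, Matrix.diagonal, hA'diag k]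
          · have : ∃ j', σ (Sum.inr j) = Sum.inr j' := by
              rcases h : σ (Sum.inr j) with k' | j'
              · exact absurd (σ.injective ((hfix k').trans h.symm)) (by simp)
              · exact ⟨j', rfl⟩
            obtain ⟨j', hj'⟩ := this
            rw [hj', h𝒜, hDdef]
            simp [Matrix.fromBlocks]
        rw [this, sub_self, abs_zero]
        positivity
      · push_neg at hfix
        obtain ⟨k, hk⟩ := hfix
        -- bound function
        set g : (Fin n ⊕ Fin m) → ℝ :=
          Sum.elim (fun j => if σ (Sum.inl j) = Sum.inl j then lam j else Mx)
            (fun _ => Mx) with hg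
        have hg0 : ∀ i, 0 ≤ g i := by
          intro i; rcases i with j | j <;> simp [hg]
          · split <;> [exact (hlampos j).le; exact hMx0.le]
          · exact hMx0.le
        have hgA : ∀ i, |𝒜 (σ i) i| ≤ g i := by
          intro i
          rcases i with j | j
          · rcases h : σ (Sum.inl j) with j' | j'
            · by_cases hjj : j' = j
              · have hgv : g (Sum.inl j) = lam j := by
                  simp [hg, h, hjj]
                rw [hgv, hjj]; simp only [h𝒜]
                simp [Matrix.fromBlocks, Matrix.diagonal, hA'diag j,
                  abs_of_pos (hlampos j)]
              · have hne : σ (Sum.inl j) ≠ Sum.inl j := by simp [h, hjj]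
                have hgv : g (Sum.inl j) = Mx := by simp [hg, hne]
                rw [hgv]; simp only [h𝒜]
                calc |(Matrix.fromBlocks (Matrix.diagonal lam + A') A'' A''.transpose B)
                        (Sum.inl j') (Sum.inl j)| ≤ M := by
                      simpa [Matrix.fromBlocks, Matrix.diagonal, hjj] using hA'bd j' j
                  _ ≤ Mx := hMMx
            · have hne : σ (Sum.inl j) ≠ Sum.inl j := by simp [h]
              have hgv : g (Sum.inl j) = Mx := by simp [hg, hne]
              rw [hgv]; simp only [h𝒜]
              calc |(Matrix.fromBlocks (Matrix.diagonal lam + A') A'' A''.transpose B)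
                      (Sum.inr j') (Sum.inl j)| ≤ M := by
                    simpa [Matrix.fromBlocks, Matrix.transpose] using hA''bd j j'
                _ ≤ Mx := hMMx
          · have hgv : g (Sum.inr j) = Mx := by simp [hg]
            rw [hgv]
            rcases h : σ (Sum.inr j) with j' | j' <;> simp only [h𝒜]
            · exact le_trans (by simpa [Matrix.fromBlocks] using hA''bd j' j) hMMx
            · exact le_trans (by simpa [Matrix.fromBlocks] using hBbd j' j) hMMx
        have hgD : ∀ i, |D (σ i) i| ≤ g i := by
          intro i
          rcases i with j | j
          · rcases h : σ (Sum.inl j) with j' | j'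
            · by_cases hjj : j' = j
              · have hgv : g (Sum.inl j) = lam j := by
                  simp [hg, h, hjj]
                rw [hgv, hjj]; simp only [hDdef]
                simp [Matrix.fromBlocks, Matrix.diagonal, abs_of_pos (hlampos j)]
              · have hne : σ (Sum.inl j) ≠ Sum.inl j := by simp [h, hjj]
                have hgv : g (Sum.inl j) = Mx := by simp [hg, hne]
                rw [hgv]; simp only [hDdef]
                simp [Matrix.fromBlocks, Matrix.diagonal, hjj, hMx0.le]
            · have hne : σ (Sum.inl j) ≠ Sum.inl j := by simp [h]
              have hgv : g (Sum.inl j) = Mx := by simp [hg, hne]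
              rw [hgv]; simp only [hDdef]
              simp [Matrix.fromBlocks, hMx0.le]
          · have hgv : g (Sum.inr j) = Mx := by simp [hg]
            rw [hgv]
            rcases h : σ (Sum.inr j) with j' | j' <;> simp only [hDdef]
            · simp [Matrix.fromBlocks, hMx0.le]
            · simpa [Matrix.fromBlocks] using (hBbd j' j).trans hMMx
        have hgprod : ∏ i, g i ≤ Mx ^ (n + m) * ((∏ j, lam j) * (lam k)⁻¹) := by
          rw [Fintype.prod_sum_type]
          have h2 : (∏ j : Fin m, g (Sum.inr j)) = Mx ^ m := by
            simp [hg]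
          have h1 : (∏ j : Fin n, g (Sum.inl j))
              ≤ Mx ^ n * ((∏ j, lam j) * (lam k)⁻¹) := by
            have hb : ∀ j : Fin n, g (Sum.inl j) ≤ Mx * (if j = k then 1 else lam j) := by
              intro j
              by_cases hjk : j = k
              · subst hjk
                simp [hg, if_neg hk, hMx0.le]
              · simp only [hg, Sum.elim_inl, if_neg hjk]
                split
                · nlinarith [hlam1 j, hlampos j]
                · nlinarith [hlam1 j]
            calc (∏ j : Fin n, g (Sum.inl j))
                ≤ ∏ j : Fin n, Mx * (if j = k then 1 else lam j) :=
                  Finset.prod_le_prod (fun j _ => hg0 _) (fun j _ => hb j)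
              _ = Mx ^ n * ∏ j : Fin n, (if j = k then 1 else lam j) := by
                  rw [Finset.prod_mul_distrib, Finset.prod_const, Finset.card_univ,
                    Fintype.card_fin]
              _ = Mx ^ n * ((∏ j, lam j) * (lam k)⁻¹) := by
                  congr 1
                  have hsplit : (∏ j, lam j)
                      = lam k * ∏ j ∈ Finset.univ.erase k, lam j :=
                    (Finset.mul_prod_erase _ _ (Finset.mem_univ k)).symm
                  rw [hsplit, mul_comm (lam k), mul_assoc,
                    mul_inv_cancel₀ (hlampos k).ne', mul_one]
                  rw [← Finset.mul_prod_erase _ _ (Finset.mem_univ k), if_pos rfl,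
                    one_mul]
                  exact Finset.prod_congr rfl fun j hj =>
                    if_neg (Finset.mem_erase.mp hj).1
          calc (∏ j : Fin n, g (Sum.inl j)) * ∏ j : Fin m, g (Sum.inr j)
              ≤ (Mx ^ n * ((∏ j, lam j) * (lam k)⁻¹)) * Mx ^ m := by
                rw [h2]
                exact mul_le_mul_of_nonneg_right h1 (by positivity)
            _ = Mx ^ (n + m) * ((∏ j, lam j) * (lam k)⁻¹) := by rw [pow_add]; ring
        have hAprod : |∏ i, 𝒜 (σ i) i| ≤ Mx ^ (n + m) * ((∏ j, lam j) * (lam k)⁻¹) := by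
          calc |∏ i, 𝒜 (σ i) i| = ∏ i, |𝒜 (σ i) i| := Finset.abs_prod _ _
            _ ≤ ∏ i, g i := Finset.prod_le_prod (fun i _ => abs_nonneg _) (fun i _ => hgA i)
            _ ≤ _ := hgprod
        have hDprod : |∏ i, D (σ i) i| ≤ Mx ^ (n + m) * ((∏ j, lam j) * (lam k)⁻¹) := by
          calc |∏ i, D (σ i) i| = ∏ i, |D (σ i) i| := Finset.abs_prod _ _
            _ ≤ ∏ i, g i := Finset.prod_le_prod (fun i _ => abs_nonneg _) (fun i _ => hgD i)
            _ ≤ _ := hgprod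
        have hkrho : (lam k)⁻¹ ≤ ∑ j, (lam j)⁻¹ :=
          Finset.single_le_sum (fun j _ => inv_nonneg.mpr (hlampos j).le) (Finset.mem_univ k)
        calc |(∏ i, 𝒜 (σ i) i) - ∏ i, D (σ i) i|
            ≤ |∏ i, 𝒜 (σ i) i| + |∏ i, D (σ i) i| := abs_sub _ _
          _ ≤ 2 * (Mx ^ (n + m) * ((∏ j, lam j) * (lam k)⁻¹)) := by linarith
          _ ≤ 2 * Mx ^ (n + m) * ((∏ j, lam j) * ∑ j, (lam j)⁻¹) := by
              rw [mul_assoc]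
              refine mul_le_mul_of_nonneg_left ?_ (by norm_num)
              refine mul_le_mul_of_nonneg_left ?_ (by positivity)
              exact mul_le_mul_of_nonneg_left hkrho hprodpos.le
    calc (∑ σ : Equiv.Perm (Fin n ⊕ Fin m),
          |Equiv.Perm.sign σ • ∏ i, 𝒜 (σ i) i - Equiv.Perm.sign σ • ∏ i, D (σ i) i|)
        ≤ (Finset.univ : Finset (Equiv.Perm (Fin n ⊕ Fin m))).card •
            (2 * Mx ^ (n + m) * ((∏ k, lam k) * ∑ k, (lam k)⁻¹)) :=
          Finset.sum_le_card_nsmul _ _ _ hterm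
      _ = (cardP : ℝ) * (2 * Mx ^ (n + m)) * ((∏ k, lam k) * ∑ k, (lam k)⁻¹) := by
          rw [nsmul_eq_mul, Finset.card_univ]; ring
  -- conclude
  have hden : B.det * ∏ k, lam k ≠ 0 := mul_ne_zero hBdet hprodpos.ne'
  rw [div_sub_one hden, abs_div, abs_mul, abs_of_pos hprodpos]
  rw [div_le_iff₀ (by positivity)]
  have hrw : 𝒜.det - B.det * ∏ k, lam k = 𝒜.det - D.det := by rw [hD]; ring
  rw [hrw]
  calc |𝒜.det - D.det|
      ≤ (cardP : ℝ) * (2 * Mx ^ (n + m)) * ((∏ k, lam k) * ∑ k, (lam k)⁻¹) := key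
    _ = (cardP : ℝ) * (2 * Mx ^ (n + m)) / |B.det| * (∑ k, (lam k)⁻¹) *
          (|B.det| * ∏ k, lam k) := by
        field_simp
end

section
/- Inverse block entry asymptotics: in the setting of the block determinant lemma, the inverse 𝒜^{-1} = (α_{jℓ}) satisfies: α_{kk} = λ_k^{-1}(1 + O(ρ)) for 1 ≤ k ≤ n; α_{jℓ} = O((λ_j λ_ℓ)^{-1}) for 1 ≤ j < ℓ ≤ n; α_{jℓ} = O(λ_j^{-1}) for 1 ≤ j ≤ n < ℓ ≤ m+n; and α_{j+n, ℓ+n} = b^{jℓ}(1 + O(ρ)) for 1 ≤ j, ℓ ≤ m, where (b^{jℓ}) = B^{-1} and ρ = Σ_k λ_k^{-1}. -/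
open Matrix Finset
open scoped NNReal

attribute [local instance] Matrix.linftyOpNormedAddCommGroup Matrix.linftyOpNormedRing
  Matrix.linftyOpNormedAlgebra

namespace BlockInvAux

lemma entry_abs_le_norm {a b : ℕ} (X : Matrix (Fin a) (Fin b) ℝ) (i : Fin a) (j : Fin b) :
    |X i j| ≤ ‖X‖ := by
  rw [Matrix.linfty_opNorm_def]
  have h1 : (∑ j' : Fin b, ‖X i j'‖₊ : ℝ≥0) ≤ (Finset.univ.sup fun i : Fin a => ∑ j' : Fin b, ‖X i j'‖₊) :=
    Finset.le_sup (f := fun i : Fin a => ∑ j' : Fin b, ‖X i j'‖₊) (Finset.mem_univ i)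
  have h2 : |X i j| ≤ ((∑ j' : Fin b, ‖X i j'‖₊ : ℝ≥0) : ℝ) := by
    push_cast
    have : |X i j| = ‖X i j‖ := rfl
    rw [this]
    exact Finset.single_le_sum (fun k _ => norm_nonneg (X i k)) (Finset.mem_univ j)
  exact h2.trans (by exact_mod_cast h1)

lemma norm_le_of_row_sums {a b : ℕ} (X : Matrix (Fin a) (Fin b) ℝ) (c : ℝ) (hc : 0 ≤ c)
    (h : ∀ i, ∑ j, |X i j| ≤ c) : ‖X‖ ≤ c := by
  rw [Matrix.linfty_opNorm_def]
  have : (Finset.univ.sup fun i : Fin a => ∑ j : Fin b, ‖X i j‖₊) ≤ ⟨c, hc⟩ := by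
    apply Finset.sup_le
    intro i _
    refine NNReal.coe_le_coe.1 ?_
    push_cast
    exact (le_of_eq (by simp)).trans (h i)
  exact_mod_cast this

lemma abs_mul_apply_le {a b c : ℕ} (X : Matrix (Fin a) (Fin b) ℝ) (Y : Matrix (Fin b) (Fin c) ℝ)
    (i : Fin a) (j : Fin c) : |(X * Y) i j| ≤ ∑ k, |X i k| * |Y k j| := by
  rw [Matrix.mul_apply]
  exact (Finset.abs_sum_le_sum_abs _ _).trans (le_of_eq (by simp [abs_mul]))

lemma entry_bound_mul {a b c : ℕ} {X : Matrix (Fin a) (Fin b) ℝ} {Y : Matrix (Fin b) (Fin c) ℝ}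
    {i : Fin a} {j : Fin c} {f g : Fin b → ℝ}
    (hX : ∀ k, |X i k| ≤ f k) (hY : ∀ k, |Y k j| ≤ g k) (hf : ∀ k, 0 ≤ f k) :
    |(X * Y) i j| ≤ ∑ k, f k * g k :=
  (abs_mul_apply_le X Y i j).trans <| Finset.sum_le_sum fun k _ =>
    mul_le_mul (hX k) (hY k) (abs_nonneg _) (hf k)

lemma norm_one_le {d : ℕ} : ‖(1 : Matrix (Fin d) (Fin d) ℝ)‖ ≤ 1 := by
  rw [show (1 : Matrix (Fin d) (Fin d) ℝ) = Matrix.diagonal (fun _ => (1:ℝ)) from (Matrix.diagonal_one).symm,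
    Matrix.linfty_opNorm_diagonal]
  apply pi_norm_le_iff_of_nonneg zero_le_one |>.2
  intro i
  simp

lemma unit_bound {d : ℕ} (t : Matrix (Fin d) (Fin d) ℝ) (ht : ‖t‖ ≤ 1/2) :
    ∃ R : Matrix (Fin d) (Fin d) ℝ, (1 + t) * R = 1 ∧ R * (1 + t) = 1 ∧ ‖R‖ ≤ 2 ∧
      R = 1 - t * R := by
  haveI : CompleteSpace (Matrix (Fin d) (Fin d) ℝ) := FiniteDimensional.complete ℝ _
  have hlt : ‖(-t)‖ < 1 := by rw [norm_neg]; linarith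
  set u : (Matrix (Fin d) (Fin d) ℝ)ˣ := Units.oneSub (-t) hlt with hu
  have huval : (u : Matrix (Fin d) (Fin d) ℝ) = 1 + t := by
    rw [hu]; show 1 - (-t) = 1 + t; rw [sub_neg_eq_add]
  let R : Matrix (Fin d) (Fin d) ℝ := ↑u⁻¹
  have h1 : (1 + t) * R = 1 := by rw [← huval]; exact u.mul_inv
  have hrec : R = 1 - t * R := by
    have h2 : R + t * R = 1 := by rw [← h1, add_mul, one_mul]
    exact eq_sub_of_add_eq h2
  have hn : ‖R‖ ≤ 1 + ‖t‖ * ‖R‖ := by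
    calc ‖R‖ = ‖1 - t * R‖ := by rw [← hrec]
      _ ≤ ‖(1 : Matrix (Fin d) (Fin d) ℝ)‖ + ‖t * R‖ := norm_sub_le _ _
      _ ≤ 1 + ‖t‖ * ‖R‖ := add_le_add norm_one_le (norm_mul_le _ _)
  refine ⟨R, h1, ?_, ?_, hrec⟩
  · rw [← huval]; exact u.inv_mul
  · nlinarith [norm_nonneg R, mul_le_mul_of_nonneg_right ht (norm_nonneg R)]

lemma half_bound {a lam0 : ℝ} (h0 : 0 < lam0) (h : 2*a ≤ lam0) : a * lam0⁻¹ ≤ 1/2 := by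
  have h1 : lam0 * lam0⁻¹ = 1 := mul_inv_cancel₀ (ne_of_gt h0)
  nlinarith [mul_le_mul_of_nonneg_right h (inv_nonneg.2 h0.le)]

end BlockInvAux

open BlockInvAux

set_option maxHeartbeats 2000000 in
/-- Inverse block entry asymptotics for
`𝒜 = fromBlocks (diag λ + A') A'' A''ᵀ B`:
`α_{kk} = λ_k⁻¹(1+O(ρ))`, `α_{jℓ} = O((λ_jλ_ℓ)⁻¹)` for `j ≠ ℓ` in the first block,
`α_{jℓ} = O(λ_j⁻¹)` for mixed indices, and `α_{j+n,ℓ+n} = b^{jℓ} + O(ρ)`. -/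
theorem block_inverse_asymptotics (m n : ℕ) (M : ℝ) (hM : 0 < M)
    (B : Matrix (Fin m) (Fin m) ℝ) (hBsymm : B.IsSymm) (hBdet : B.det ≠ 0)
    (hBbd : ∀ i j, |B i j| ≤ M) :
    ∃ C lam0 : ℝ, 0 < C ∧ 0 < lam0 ∧
      ∀ (lam : Fin n → ℝ) (A' : Matrix (Fin n) (Fin n) ℝ) (A'' : Matrix (Fin n) (Fin m) ℝ),
        (∀ k, lam0 ≤ lam k) → A'.IsSymm → (∀ k, A' k k = 0) →
        (∀ i j, |A' i j| ≤ M) → (∀ i j, |A'' i j| ≤ M) →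
        (∀ k : Fin n,
          |(Matrix.fromBlocks (Matrix.diagonal lam + A') A'' A''.transpose B)⁻¹
              (Sum.inl k) (Sum.inl k) - (lam k)⁻¹|
            ≤ C * (lam k)⁻¹ * ∑ i, (lam i)⁻¹)
        ∧ (∀ j ℓ : Fin n, j ≠ ℓ →
          |(Matrix.fromBlocks (Matrix.diagonal lam + A') A'' A''.transpose B)⁻¹
              (Sum.inl j) (Sum.inl ℓ)| ≤ C * ((lam j) * (lam ℓ))⁻¹)
        ∧ (∀ (j : Fin n) (ℓ : Fin m),
          |(Matrix.fromBlocks (Matrix.diagonal lam + A') A'' A''.transpose B)⁻¹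
              (Sum.inl j) (Sum.inr ℓ)| ≤ C * (lam j)⁻¹)
        ∧ (∀ j ℓ : Fin m,
          |(Matrix.fromBlocks (Matrix.diagonal lam + A') A'' A''.transpose B)⁻¹
              (Sum.inr j) (Sum.inr ℓ) - B⁻¹ j ℓ| ≤ C * ∑ i, (lam i)⁻¹) := by
  classical
  have hM0 : (0:ℝ) ≤ M := hM.le
  have hnn : (n:ℝ) ≤ (n:ℝ)^2 := by
    rcases Nat.eq_zero_or_pos n with h|h
    · simp [h]
    · have h1n : (1:ℝ) ≤ (n:ℝ) := by exact_mod_cast h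
      nlinarith
  have hKb0 : (0:ℝ) ≤ ‖(B⁻¹ : Matrix (Fin m) (Fin m) ℝ)‖ := norm_nonneg _
  set Kb : ℝ := ‖(B⁻¹ : Matrix (Fin m) (Fin m) ℝ)‖ with hKbdef
  have hC10 : (0:ℝ) < M + 2*M^2*(n:ℝ)^2 := by positivity
  set C₁ : ℝ := M + 2*M^2*(n:ℝ)^2 with hC1def
  -- constants
  have hCa0 : (0:ℝ) < C₁ + 8*(m:ℝ)^2*M^2*Kb :=
    add_pos_of_pos_of_nonneg hC10 (mul_nonneg (by positivity) hKb0)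
  set Ca : ℝ := C₁ + 8*(m:ℝ)^2*M^2*Kb with hCadef
  have hCc0 : (0:ℝ) ≤ 4*(m:ℝ)*M*Kb := mul_nonneg (by positivity) hKb0
  set Cc : ℝ := 4*(m:ℝ)*M*Kb with hCcdef
  have hC20 : (0:ℝ) ≤ 4*Kb^2*(m:ℝ)*M^2 := by positivity
  set C₂ : ℝ := 4*Kb^2*(m:ℝ)*M^2 with hC2def
  have ht1 : (0:ℝ) ≤ 2*(n:ℝ)*M := by positivity
  have ht2 : (0:ℝ) ≤ 2*C₁*(n:ℝ) := mul_nonneg (by linarith) (Nat.cast_nonneg n)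
  have ht3 : (0:ℝ) ≤ 8*Kb*(m:ℝ)*M^2*(n:ℝ)^2 :=
    mul_nonneg (mul_nonneg (mul_nonneg (by linarith) (Nat.cast_nonneg m)) (by positivity))
      (by positivity)
  have hlam0pos : (0:ℝ) < 1 + 2*(n:ℝ)*M + 2*C₁*(n:ℝ) + 8*Kb*(m:ℝ)*M^2*(n:ℝ)^2 := by linarith
  set lam0 : ℝ := 1 + 2*(n:ℝ)*M + 2*C₁*(n:ℝ) + 8*Kb*(m:ℝ)*M^2*(n:ℝ)^2 with hlam0def
  have hCpos : (0:ℝ) < 1 + Ca + Cc + C₂ := by linarith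
  set C : ℝ := 1 + Ca + Cc + C₂ with hCdef
  refine ⟨C, lam0, hCpos, hlam0pos, ?_⟩
  intro lam A' A'' hlam hsymm hdiag hA' hA''
  have hlam0ge1 : (1:ℝ) ≤ lam0 := by rw [hlam0def]; linarith
  have hlpos : ∀ k, 0 < lam k := fun k => lt_of_lt_of_le hlam0pos (hlam k)
  have hlinv0 : ∀ k, 0 < (lam k)⁻¹ := fun k => inv_pos.2 (hlpos k)
  have hlinvle : ∀ k, (lam k)⁻¹ ≤ lam0⁻¹ := fun k => inv_anti₀ hlam0pos (hlam k)
  have hρ0 : (0:ℝ) ≤ ∑ i, (lam i)⁻¹ := Finset.sum_nonneg fun i _ => (hlinv0 i).le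
  set ρ : ℝ := ∑ i, (lam i)⁻¹ with hρdef
  have hρle : ρ ≤ (n:ℝ) * lam0⁻¹ := by
    rw [hρdef]
    calc ∑ i, (lam i)⁻¹ ≤ ∑ _i : Fin n, lam0⁻¹ := Finset.sum_le_sum fun i _ => hlinvle i
      _ = (n:ℝ) * lam0⁻¹ := by simp [Finset.sum_const, nsmul_eq_mul]
  have hmemρ : ∀ k, (lam k)⁻¹ ≤ ρ := fun k =>
    Finset.single_le_sum (fun i _ => (hlinv0 i).le) (Finset.mem_univ k)
  have hlam0inv1 : lam0⁻¹ ≤ 1 := by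
    rw [← inv_one]
    exact inv_anti₀ one_pos hlam0ge1
  have hρn : ρ ≤ (n:ℝ) := by
    calc ρ ≤ (n:ℝ) * lam0⁻¹ := hρle
      _ ≤ (n:ℝ) * 1 := mul_le_mul_of_nonneg_left hlam0inv1 (Nat.cast_nonneg n)
      _ = (n:ℝ) := mul_one _
  -- the matrix N = D⁻¹ A'
  set Dinv : Matrix (Fin n) (Fin n) ℝ := Matrix.diagonal (fun i => (lam i)⁻¹) with hDinvdef
  set N : Matrix (Fin n) (Fin n) ℝ := Dinv * A' with hNdef
  have hNentry : ∀ i j, |N i j| ≤ M * (lam i)⁻¹ := by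
    intro i j
    calc |N i j| = (lam i)⁻¹ * |A' i j| := by
          rw [hNdef, hDinvdef, Matrix.diagonal_mul, abs_mul, abs_of_pos (hlinv0 i)]
      _ ≤ (lam i)⁻¹ * M := mul_le_mul_of_nonneg_left (hA' i j) (hlinv0 i).le
      _ = M * (lam i)⁻¹ := mul_comm _ _
  have hNnorm : ‖N‖ ≤ 1/2 := by
    apply norm_le_of_row_sums _ _ (by norm_num)
    intro i
    calc ∑ j, |N i j| ≤ ∑ _j : Fin n, M * (lam i)⁻¹ := Finset.sum_le_sum fun j _ => hNentry i j
      _ = (n:ℝ) * M * (lam i)⁻¹ := by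
          simp [Finset.sum_const, nsmul_eq_mul]
          try ring
      _ ≤ (n:ℝ) * M * lam0⁻¹ := by
          apply mul_le_mul_of_nonneg_left (hlinvle i) (by positivity)
      _ ≤ 1/2 := half_bound hlam0pos (by rw [hlam0def]; nlinarith)
  obtain ⟨Rm, h1R, hR1, hRnorm, hRrec⟩ := unit_bound N hNnorm
  have hRentry : ∀ i j, |Rm i j| ≤ 2 := fun i j => (entry_abs_le_norm Rm i j).trans hRnorm
  have hNR : ∀ i j, |(N * Rm) i j| ≤ 2*M*(n:ℝ)*(lam i)⁻¹ := by
    intro i j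
    calc |(N * Rm) i j| ≤ ∑ _k : Fin n, (M * (lam i)⁻¹) * 2 :=
          entry_bound_mul (hNentry i) (fun k => hRentry k j)
            (fun _ => mul_nonneg hM0 (hlinv0 i).le)
      _ = 2*M*(n:ℝ)*(lam i)⁻¹ := by
          simp [Finset.sum_const, nsmul_eq_mul]
          try ring
  have hsecond : Rm = 1 - N + N * (N * Rm) := by
    calc Rm = 1 - N * Rm := hRrec
      _ = 1 - N * (1 - N * Rm) := by rw [← hRrec]; exact hRrec
      _ = 1 - N + N * (N * Rm) := by noncomm_ring
  have hNNR : ∀ i j, |(N * (N * Rm)) i j| ≤ 2*M^2*(n:ℝ)*((lam i)⁻¹*ρ) := by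
    intro i j
    calc |(N * (N * Rm)) i j| ≤ ∑ k : Fin n, (M * (lam i)⁻¹) * (2*M*(n:ℝ)*(lam k)⁻¹) :=
          entry_bound_mul (hNentry i) (fun k => hNR k j)
            (fun _ => mul_nonneg hM0 (hlinv0 i).le)
      _ = 2*M^2*(n:ℝ)*((lam i)⁻¹* ∑ k, (lam k)⁻¹) := by
          simp only [Finset.mul_sum]
          exact Finset.sum_congr rfl fun k _ => by ring
      _ = 2*M^2*(n:ℝ)*((lam i)⁻¹*ρ) := by rw [← hρdef]
  -- Pinv
  set Pinv : Matrix (Fin n) (Fin n) ℝ := Rm * Dinv with hPinvdef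
  have hPapp : ∀ i j, Pinv i j = Rm i j * (lam j)⁻¹ := by
    intro i j; rw [hPinvdef, hDinvdef, Matrix.mul_diagonal]
  have hA1 : ∀ i j, |Pinv i j - (if i = j then (lam i)⁻¹ else 0)|
      ≤ C₁ * ((lam i)⁻¹ * (lam j)⁻¹) := by
    intro i j
    have hRij : Rm i j = (if i = j then (1:ℝ) else 0) - N i j + (N * (N * Rm)) i j := by
      conv_lhs => rw [hsecond]
      simp [Matrix.sub_apply, Matrix.add_apply, Matrix.one_apply]
    have hkey : Pinv i j - (if i = j then (lam i)⁻¹ else 0)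
        = (-(N i j) + (N * (N * Rm)) i j) * (lam j)⁻¹ := by
      rw [hPapp, hRij]
      by_cases h : i = j
      · subst h; simp; ring
      · simp [h]
    rw [hkey]
    have habs : |(-(N i j) + (N * (N * Rm)) i j) * (lam j)⁻¹|
        ≤ (|N i j| + |(N * (N * Rm)) i j|) * (lam j)⁻¹ := by
      rw [abs_mul, abs_of_pos (hlinv0 j)]
      apply mul_le_mul_of_nonneg_right _ (hlinv0 j).le
      exact (abs_add_le _ _).trans (by rw [abs_neg])
    refine habs.trans ?_
    have h1 := hNentry i j
    have h2 := hNNR i j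
    have hstep : (|N i j| + |(N * (N * Rm)) i j|) * (lam j)⁻¹
        ≤ (M*(lam i)⁻¹ + 2*M^2*(n:ℝ)*((lam i)⁻¹*ρ))*(lam j)⁻¹ :=
      mul_le_mul_of_nonneg_right (add_le_add h1 h2) (hlinv0 j).le
    refine hstep.trans ?_
    have e1 : (M*(lam i)⁻¹ + 2*M^2*(n:ℝ)*((lam i)⁻¹*ρ))*(lam j)⁻¹
        = M*((lam i)⁻¹*(lam j)⁻¹) + (2*M^2*(n:ℝ))*((lam i)⁻¹*(lam j)⁻¹)*ρ := by ring
    have e2 : (2*M^2*(n:ℝ))*((lam i)⁻¹*(lam j)⁻¹)*ρ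
        ≤ (2*M^2*(n:ℝ))*((lam i)⁻¹*(lam j)⁻¹)*(n:ℝ) :=
      mul_le_mul_of_nonneg_left hρn
        (mul_nonneg (by positivity) (mul_nonneg (hlinv0 i).le (hlinv0 j).le))
    have e3 : C₁ * ((lam i)⁻¹ * (lam j)⁻¹)
        = M*((lam i)⁻¹*(lam j)⁻¹) + (2*M^2*(n:ℝ))*((lam i)⁻¹*(lam j)⁻¹)*(n:ℝ) := by
      rw [hC1def]; ring
    linarith
  -- entrywise bound on |Pinv|
  have hPabs : ∀ i j : Fin n, |Pinv i j|
      ≤ (if i = j then (lam j)⁻¹ else 0) + C₁ * ((lam i)⁻¹ * (lam j)⁻¹) := by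
    intro i j
    have h := hA1 i j
    have h2 : |if i = j then (lam i)⁻¹ else 0| = if i = j then (lam j)⁻¹ else 0 := by
      by_cases hij : i = j
      · subst hij; simp [abs_of_pos (hlinv0 i)]
      · simp [hij]
    have e : Pinv i j
        = (Pinv i j - (if i = j then (lam i)⁻¹ else 0)) + (if i = j then (lam i)⁻¹ else 0) := by
      ring
    calc |Pinv i j| ≤ |Pinv i j - (if i = j then (lam i)⁻¹ else 0)|
          + |if i = j then (lam i)⁻¹ else 0| := by
          conv_lhs => rw [e]
          exact abs_add_le _ _
      _ ≤ C₁ * ((lam i)⁻¹ * (lam j)⁻¹) + (if i = j then (lam j)⁻¹ else 0) :=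
          add_le_add h (le_of_eq h2)
      _ = _ := add_comm _ _
  have hC₁ρ : C₁ * ρ ≤ 1/2 := by
    calc C₁ * ρ ≤ C₁ * ((n:ℝ) * lam0⁻¹) := mul_le_mul_of_nonneg_left hρle hC10.le
      _ = (C₁ * (n:ℝ)) * lam0⁻¹ := by ring
      _ ≤ 1/2 := half_bound hlam0pos (by rw [hlam0def]; linarith)
  have hProw : ∀ j, ∑ a, |Pinv j a| ≤ 2*(lam j)⁻¹ := by
    intro j
    calc ∑ a, |Pinv j a|
        ≤ ∑ a, ((if j = a then (lam a)⁻¹ else 0) + C₁ * ((lam j)⁻¹ * (lam a)⁻¹)) :=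
          Finset.sum_le_sum fun a _ => hPabs j a
      _ = (lam j)⁻¹ + C₁ * (lam j)⁻¹ * ρ := by
          rw [Finset.sum_add_distrib]
          congr 1
          · simp
          · rw [hρdef, Finset.mul_sum]
            exact Finset.sum_congr rfl fun a _ => by ring
      _ ≤ 2*(lam j)⁻¹ := by
          linarith [mul_le_mul_of_nonneg_left hC₁ρ (hlinv0 j).le, hlinv0 j]
  have hPcol : ∀ ℓ, ∑ d, |Pinv d ℓ| ≤ 2*(lam ℓ)⁻¹ := by
    intro ℓ
    calc ∑ d, |Pinv d ℓ|
        ≤ ∑ d, ((if d = ℓ then (lam ℓ)⁻¹ else 0) + C₁ * ((lam d)⁻¹ * (lam ℓ)⁻¹)) :=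
          Finset.sum_le_sum fun d _ => hPabs d ℓ
      _ = (lam ℓ)⁻¹ + C₁ * (lam ℓ)⁻¹ * ρ := by
          rw [Finset.sum_add_distrib]
          congr 1
          · simp
          · rw [hρdef, Finset.mul_sum]
            exact Finset.sum_congr rfl fun d _ => by ring
      _ ≤ 2*(lam ℓ)⁻¹ := by
          linarith [mul_le_mul_of_nonneg_left hC₁ρ (hlinv0 ℓ).le, hlinv0 ℓ]
  -- P and its inverse
  set P : Matrix (Fin n) (Fin n) ℝ := Matrix.diagonal lam + A' with hPdef
  have hDDinv : Matrix.diagonal lam * Dinv = 1 := by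
    rw [hDinvdef, Matrix.diagonal_mul_diagonal,
      show (fun i => lam i * (lam i)⁻¹) = fun _ => (1:ℝ) from
        funext fun i => mul_inv_cancel₀ (ne_of_gt (hlpos i)), Matrix.diagonal_one]
  have hDinvD : Dinv * Matrix.diagonal lam = 1 := by
    rw [hDinvdef, Matrix.diagonal_mul_diagonal,
      show (fun i => (lam i)⁻¹ * lam i) = fun _ => (1:ℝ) from
        funext fun i => inv_mul_cancel₀ (ne_of_gt (hlpos i)), Matrix.diagonal_one]
  have hPfact : P = Matrix.diagonal lam * (1 + N) := by
    rw [hPdef, hNdef, mul_add, mul_one, ← mul_assoc, hDDinv, one_mul]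
  have hPPinv : P * Pinv = 1 := by
    rw [hPfact, hPinvdef, mul_assoc (Matrix.diagonal lam) (1 + N) (Rm * Dinv),
      ← mul_assoc (1 + N) Rm Dinv, h1R, one_mul, hDDinv]
  have hPinvP : Pinv * P = 1 := by
    rw [hPfact, hPinvdef, mul_assoc Rm Dinv _, ← mul_assoc Dinv _ (1 + N), hDinvD,
      one_mul, hR1]
  -- Schur complement
  have hATP : ∀ (j : Fin m) (i : Fin n), |(A''.transpose * Pinv) j i| ≤ M * (2*(lam i)⁻¹) := by
    intro j i
    calc |(A''.transpose * Pinv) j i| ≤ ∑ k, |A''.transpose j k| * |Pinv k i| :=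
          abs_mul_apply_le _ _ _ _
      _ ≤ ∑ k, M * |Pinv k i| := Finset.sum_le_sum fun k _ =>
          mul_le_mul_of_nonneg_right
            (by rw [Matrix.transpose_apply]; exact hA'' k j) (abs_nonneg _)
      _ = M * ∑ k, |Pinv k i| := by rw [Finset.mul_sum]
      _ ≤ M * (2*(lam i)⁻¹) := mul_le_mul_of_nonneg_left (hPcol i) hM0
  have hEentry : ∀ j l, |(A''.transpose * Pinv * A'') j l| ≤ 2*M^2*ρ := by
    intro j l
    calc |(A''.transpose * Pinv * A'') j l| ≤ ∑ i, (M * (2*(lam i)⁻¹)) * M :=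
          entry_bound_mul (hATP j) (fun i => hA'' i l)
            (fun i => mul_nonneg hM0 (by linarith [hlinv0 i]))
      _ = 2*M^2*ρ := by
          rw [hρdef, Finset.mul_sum]
          exact Finset.sum_congr rfl fun i _ => by ring
  have hEnorm : ‖A''.transpose * Pinv * A''‖ ≤ (m:ℝ)*(2*M^2*ρ) := by
    apply norm_le_of_row_sums _ _
      (mul_nonneg (Nat.cast_nonneg m) (mul_nonneg (by positivity) hρ0))
    intro j
    calc ∑ l, |(A''.transpose * Pinv * A'') j l| ≤ ∑ _l : Fin m, 2*M^2*ρ :=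
          Finset.sum_le_sum fun l _ => hEentry j l
      _ = (m:ℝ)*(2*M^2*ρ) := by simp [Finset.sum_const, nsmul_eq_mul]
  have hBdet' : IsUnit B.det := Ne.isUnit hBdet
  have hBBinv : B * B⁻¹ = 1 := Matrix.mul_nonsing_inv B hBdet'
  have hBinvB : B⁻¹ * B = 1 := Matrix.nonsing_inv_mul B hBdet'
  set X : Matrix (Fin m) (Fin m) ℝ := -(B⁻¹ * (A''.transpose * Pinv * A'')) with hXdef
  have hXnorm : ‖X‖ ≤ Kb * ((m:ℝ)*(2*M^2*ρ)) := by
    rw [hXdef, norm_neg]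
    calc ‖B⁻¹ * (A''.transpose * Pinv * A'')‖
        ≤ ‖(B⁻¹ : Matrix (Fin m) (Fin m) ℝ)‖ * ‖A''.transpose * Pinv * A''‖ := norm_mul_le _ _
      _ ≤ Kb * ((m:ℝ)*(2*M^2*ρ)) := by
          rw [← hKbdef]
          exact mul_le_mul_of_nonneg_left hEnorm hKb0
  have hXhalf : ‖X‖ ≤ 1/2 := by
    refine hXnorm.trans ?_
    have h1 : Kb * ((m:ℝ)*(2*M^2*ρ)) ≤ Kb * ((m:ℝ)*(2*M^2*((n:ℝ)*lam0⁻¹))) := by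
      apply mul_le_mul_of_nonneg_left _ hKb0
      apply mul_le_mul_of_nonneg_left _ (Nat.cast_nonneg m)
      exact mul_le_mul_of_nonneg_left hρle (by positivity)
    refine h1.trans ?_
    have e : Kb*((m:ℝ)*(2*M^2*((n:ℝ)*lam0⁻¹))) = (2*Kb*(m:ℝ)*M^2*(n:ℝ)) * lam0⁻¹ := by ring
    rw [e]
    apply half_bound hlam0pos
    rw [hlam0def]
    have hfac : 0 ≤ Kb*(m:ℝ)*M^2 :=
      mul_nonneg (mul_nonneg hKb0 (Nat.cast_nonneg m)) (by positivity)
    linarith [mul_le_mul_of_nonneg_left hnn hfac,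
      mul_nonneg hfac (Nat.cast_nonneg n)]
  obtain ⟨W, hW1, hWl, hWnorm, hWrec⟩ := unit_bound X hXhalf
  set Sinv : Matrix (Fin m) (Fin m) ℝ := W * B⁻¹ with hSinvdef
  have hSfact : B - A''.transpose * Pinv * A'' = B * (1 + X) := by
    rw [hXdef, mul_add, mul_one, mul_neg, ← mul_assoc, hBBinv, one_mul, ← sub_eq_add_neg]
  have hSSinv : (B - A''.transpose * Pinv * A'') * Sinv = 1 := by
    rw [hSfact, hSinvdef, mul_assoc B (1+X) _, ← mul_assoc (1+X) W _, hW1, one_mul, hBBinv]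
  have hSinvS : Sinv * (B - A''.transpose * Pinv * A'') = 1 := by
    rw [hSfact, hSinvdef, mul_assoc W _ _, ← mul_assoc B⁻¹ B _, hBinvB, one_mul, hWl]
  have hSinvnorm : ‖Sinv‖ ≤ 2*Kb := by
    rw [hSinvdef]
    calc ‖W * B⁻¹‖ ≤ ‖W‖ * ‖(B⁻¹ : Matrix (Fin m) (Fin m) ℝ)‖ := norm_mul_le _ _
      _ ≤ 2*Kb := by
          rw [← hKbdef]
          exact mul_le_mul hWnorm le_rfl hKb0 (by norm_num)
  have hSinventry : ∀ i j, |Sinv i j| ≤ 2*Kb := fun i j =>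
    (entry_abs_le_norm _ i j).trans hSinvnorm
  have hSdiffnorm : ‖Sinv - B⁻¹‖ ≤ C₂ * ρ := by
    have hW1' : W - 1 = -(X*W) := by
      conv_lhs => rw [hWrec]
      abel
    have e : Sinv - B⁻¹ = (-(X*W))*B⁻¹ := by
      rw [hSinvdef, ← hW1', sub_mul, one_mul]
    rw [e]
    have hXn0 : (0:ℝ) ≤ Kb * ((m:ℝ)*(2*M^2*ρ)) :=
      mul_nonneg hKb0 (mul_nonneg (Nat.cast_nonneg m) (mul_nonneg (by positivity) hρ0))
    calc ‖(-(X*W))*B⁻¹‖ ≤ ‖(-(X*W))‖ * ‖(B⁻¹ : Matrix (Fin m) (Fin m) ℝ)‖ := norm_mul_le _ _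
      _ = ‖X*W‖ * Kb := by rw [norm_neg, ← hKbdef]
      _ ≤ (‖X‖*‖W‖) * Kb := mul_le_mul_of_nonneg_right (norm_mul_le _ _) hKb0
      _ ≤ ((Kb * ((m:ℝ)*(2*M^2*ρ)))*2) * Kb := by
          apply mul_le_mul_of_nonneg_right _ hKb0
          exact mul_le_mul hXnorm hWnorm (norm_nonneg _) hXn0
      _ = C₂ * ρ := by rw [hC2def]; ring
  have hSdiff : ∀ j l, |Sinv j l - B⁻¹ j l| ≤ C₂ * ρ := by
    intro j l
    have e : Sinv j l - B⁻¹ j l = (Sinv - B⁻¹) j l := by simp [Matrix.sub_apply]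
    rw [e]
    exact (entry_abs_le_norm _ j l).trans hSdiffnorm
  -- block inverse formula
  letI instP : Invertible P := ⟨Pinv, hPinvP, hPPinv⟩
  letI instS : Invertible (B - A''.transpose * ⅟P * A'') := ⟨Sinv, hSinvS, hSSinv⟩
  letI instA : Invertible (Matrix.fromBlocks P A'' A''.transpose B) :=
    Matrix.fromBlocks₁₁Invertible P A'' A''.transpose B
  have hAinv : (Matrix.fromBlocks P A'' A''.transpose B)⁻¹ =
      Matrix.fromBlocks (Pinv + Pinv * A'' * Sinv * A''.transpose * Pinv)
        (-(Pinv * A'' * Sinv)) (-(Sinv * A''.transpose * Pinv)) Sinv := by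
    rw [← Matrix.invOf_eq_nonsing_inv, Matrix.invOf_fromBlocks₁₁_eq]
    rfl
  -- bounds on the correction term
  have hPA : ∀ (j : Fin n) (b : Fin m), |(Pinv * A'') j b| ≤ (2*(lam j)⁻¹) * M := by
    intro j b
    calc |(Pinv * A'') j b| ≤ ∑ a, |Pinv j a| * |A'' a b| := abs_mul_apply_le _ _ _ _
      _ ≤ ∑ a, |Pinv j a| * M := Finset.sum_le_sum fun a _ =>
          mul_le_mul_of_nonneg_left (hA'' a b) (abs_nonneg _)
      _ = (∑ a, |Pinv j a|) * M := by rw [Finset.sum_mul]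
      _ ≤ (2*(lam j)⁻¹) * M := mul_le_mul_of_nonneg_right (hProw j) hM0
  have hPAS : ∀ (j : Fin n) (c : Fin m),
      |(Pinv * A'' * Sinv) j c| ≤ (m:ℝ)*((2*(lam j)⁻¹)*M*(2*Kb)) := by
    intro j c
    calc |(Pinv * A'' * Sinv) j c| ≤ ∑ _b : Fin m, ((2*(lam j)⁻¹)*M) * (2*Kb) :=
          entry_bound_mul (hPA j) (fun b => hSinventry b c)
            (fun b => mul_nonneg (by linarith [hlinv0 j]) hM0)
      _ = (m:ℝ)*((2*(lam j)⁻¹)*M*(2*Kb)) := by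
          simp [Finset.sum_const, nsmul_eq_mul]
          try ring
  have hPASA : ∀ (j d : Fin n), |(Pinv * A'' * Sinv * A''.transpose) j d|
      ≤ (m:ℝ)*(((m:ℝ)*((2*(lam j)⁻¹)*M*(2*Kb)))*M) := by
    intro j d
    calc |(Pinv * A'' * Sinv * A''.transpose) j d|
        ≤ ∑ _c : Fin m, ((m:ℝ)*((2*(lam j)⁻¹)*M*(2*Kb))) * M :=
          entry_bound_mul (hPAS j)
            (fun c => by rw [Matrix.transpose_apply]; exact hA'' d c)
            (fun c => mul_nonneg (Nat.cast_nonneg m)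
              (mul_nonneg (mul_nonneg (by linarith [hlinv0 j]) hM0) (by linarith)))
      _ = (m:ℝ)*(((m:ℝ)*((2*(lam j)⁻¹)*M*(2*Kb)))*M) := by
          simp [Finset.sum_const, nsmul_eq_mul]
          try ring
  have hT : ∀ (j ℓ : Fin n), |(Pinv * A'' * Sinv * A''.transpose * Pinv) j ℓ|
      ≤ 8*(m:ℝ)^2*M^2*Kb*((lam j)⁻¹*(lam ℓ)⁻¹) := by
    intro j ℓ
    have hbig : 0 ≤ (m:ℝ)*(((m:ℝ)*((2*(lam j)⁻¹)*M*(2*Kb)))*M) :=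
      mul_nonneg (Nat.cast_nonneg m)
        (mul_nonneg (mul_nonneg (Nat.cast_nonneg m)
          (mul_nonneg (mul_nonneg (by linarith [hlinv0 j]) hM0) (by linarith))) hM0)
    calc |(Pinv * A'' * Sinv * A''.transpose * Pinv) j ℓ|
        ≤ ∑ d, |(Pinv * A'' * Sinv * A''.transpose) j d| * |Pinv d ℓ| :=
          abs_mul_apply_le _ _ _ _
      _ ≤ ∑ d, ((m:ℝ)*(((m:ℝ)*((2*(lam j)⁻¹)*M*(2*Kb)))*M)) * |Pinv d ℓ| :=
          Finset.sum_le_sum fun d _ =>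
            mul_le_mul_of_nonneg_right (hPASA j d) (abs_nonneg _)
      _ = ((m:ℝ)*(((m:ℝ)*((2*(lam j)⁻¹)*M*(2*Kb)))*M)) * ∑ d, |Pinv d ℓ| := by
          rw [Finset.mul_sum]
      _ ≤ ((m:ℝ)*(((m:ℝ)*((2*(lam j)⁻¹)*M*(2*Kb)))*M)) * (2*(lam ℓ)⁻¹) :=
          mul_le_mul_of_nonneg_left (hPcol ℓ) hbig
      _ = 8*(m:ℝ)^2*M^2*Kb*((lam j)⁻¹*(lam ℓ)⁻¹) := by ring
  refine ⟨?_, ?_, ?_, ?_⟩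
  · intro k
    rw [hAinv, Matrix.fromBlocks_apply₁₁, Matrix.add_apply]
    have h1 := hA1 k k
    rw [if_pos rfl] at h1
    have h2 := hT k k
    have e : Pinv k k + (Pinv * A'' * Sinv * A''.transpose * Pinv) k k - (lam k)⁻¹
        = (Pinv k k - (lam k)⁻¹) + (Pinv * A'' * Sinv * A''.transpose * Pinv) k k := by ring
    rw [e]
    calc |(Pinv k k - (lam k)⁻¹) + (Pinv * A'' * Sinv * A''.transpose * Pinv) k k|
        ≤ |Pinv k k - (lam k)⁻¹| + |(Pinv * A'' * Sinv * A''.transpose * Pinv) k k| :=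
          abs_add_le _ _
      _ ≤ C₁ * ((lam k)⁻¹*(lam k)⁻¹) + 8*(m:ℝ)^2*M^2*Kb*((lam k)⁻¹*(lam k)⁻¹) :=
          add_le_add h1 h2
      _ = Ca * ((lam k)⁻¹*(lam k)⁻¹) := by rw [hCadef]; ring
      _ ≤ Ca * ((lam k)⁻¹*ρ) := mul_le_mul_of_nonneg_left
          (mul_le_mul_of_nonneg_left (hmemρ k) (hlinv0 k).le) hCa0.le
      _ ≤ C * ((lam k)⁻¹*ρ) := mul_le_mul_of_nonneg_right
          (by rw [hCdef]; linarith) (mul_nonneg (hlinv0 k).le hρ0)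
      _ = C * (lam k)⁻¹ * ρ := by ring
  · intro j ℓ hne
    rw [hAinv, Matrix.fromBlocks_apply₁₁, Matrix.add_apply]
    have h1 := hA1 j ℓ
    rw [if_neg hne, sub_zero] at h1
    have h2 := hT j ℓ
    calc |Pinv j ℓ + (Pinv * A'' * Sinv * A''.transpose * Pinv) j ℓ|
        ≤ |Pinv j ℓ| + |(Pinv * A'' * Sinv * A''.transpose * Pinv) j ℓ| := abs_add_le _ _
      _ ≤ C₁ * ((lam j)⁻¹*(lam ℓ)⁻¹) + 8*(m:ℝ)^2*M^2*Kb*((lam j)⁻¹*(lam ℓ)⁻¹) :=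
          add_le_add h1 h2
      _ = Ca * ((lam j)⁻¹*(lam ℓ)⁻¹) := by rw [hCadef]; ring
      _ ≤ C * ((lam j)⁻¹*(lam ℓ)⁻¹) := mul_le_mul_of_nonneg_right
          (by rw [hCdef]; linarith) (mul_nonneg (hlinv0 j).le (hlinv0 ℓ).le)
      _ = C * ((lam j) * (lam ℓ))⁻¹ := by rw [mul_inv]
  · intro j ℓ
    rw [hAinv, Matrix.fromBlocks_apply₁₂, Matrix.neg_apply, abs_neg]
    calc |(Pinv * A'' * Sinv) j ℓ| ≤ (m:ℝ)*((2*(lam j)⁻¹)*M*(2*Kb)) := hPAS j ℓ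
      _ = Cc * (lam j)⁻¹ := by rw [hCcdef]; ring
      _ ≤ C * (lam j)⁻¹ := mul_le_mul_of_nonneg_right
          (by rw [hCdef]; linarith) (hlinv0 j).le
  · intro j ℓ
    rw [hAinv, Matrix.fromBlocks_apply₂₂]
    exact (hSdiff j ℓ).trans
      (mul_le_mul_of_nonneg_right (by rw [hCdef]; linarith) hρ0)
end
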